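/- For all integers n ≥ 0 and p ≥ 0: Σ_{k=1}^{n} (1/2^{2k})·C(2(k+p), k+p)·C(k+p, k)·(O_{k+p} − O_p) = (1/2^{2n+1})·((p+1)/(2p+1))·C(2(n+p+1), n+p+1)·C(n+p+1, n)·(O_{n+p+1} − O_{p+1}). -/

import Mathlib

open Finset

/-- Multiple harmonic-like numbers `H_n(m)`: the sum of `1/(k_1 ⋯ k_m)` over all
`m`-tuples of positive integers with `k_1 + ⋯ + k_m ≤ n`. -/
def Hml (n m : ℕ) : ℚ :=
  ∑ k ∈ (Fintype.piFinset fun _ : Fin m => Finset.Icc 1 n).filter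
      (fun k => ∑ i, k i ≤ n),
    ∏ i, (1 : ℚ) / (k i : ℚ)

/-- The `n`-th harmonic number. -/
def harm (n : ℕ) : ℚ := ∑ j ∈ Finset.Icc 1 n, (1 : ℚ) / (j : ℚ)

/-- The `n`-th second-order harmonic number. -/
def harm2 (n : ℕ) : ℚ := ∑ j ∈ Finset.Icc 1 n, (1 : ℚ) / (j : ℚ) ^ 2

/-- The `n`-th odd harmonic number. -/
def oddharm (n : ℕ) : ℚ := ∑ k ∈ Finset.Icc 1 n, (1 : ℚ) / (2 * (k : ℚ) - 1)

/-- Signed Stirling numbers of the first kind. -/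
def stirlingFirst : ℕ → ℕ → ℤ
  | 0, 0 => 1
  | 0, _ + 1 => 0
  | _ + 1, 0 => 0
  | n + 1, k + 1 => stirlingFirst n k - n * stirlingFirst n (k + 1)

/-- Generalized binomial coefficient `C(r, k) = r(r−1)⋯(r−k+1)/k!`. -/
noncomputable def gchoose (r : ℂ) (k : ℕ) : ℂ :=
  (∏ i ∈ Finset.range k, (r - i)) / (k.factorial : ℂ)

lemma oddharm_succ (k : ℕ) : oddharm (k + 1) = oddharm k + 1 / (2 * (k : ℚ) + 1) := by
  unfold oddharm
  rw [Finset.sum_Icc_succ_top (by omega)]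
  push_cast
  ring

theorem stmt_18 (n p : ℕ) :
    ∑ k ∈ Finset.Icc 1 n,
        (1 / 2 ^ (2 * k) : ℚ) * ((2 * (k + p)).choose (k + p) : ℚ) *
          ((k + p).choose k : ℚ) * (oddharm (k + p) - oddharm p) =
      (1 / 2 ^ (2 * n + 1) : ℚ) * (((p : ℚ) + 1) / (2 * (p : ℚ) + 1)) *
        ((2 * (n + p + 1)).choose (n + p + 1) : ℚ) * ((n + p + 1).choose n : ℚ) *
        (oddharm (n + p + 1) - oddharm (p + 1)) := by
  induction n with
  | zero => simp
  | succ n ih =>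
    rw [Finset.sum_Icc_succ_top (by omega), ih]
    have hm : n + 1 + p = n + p + 1 := by ring
    have hm2 : n + p + 1 + 1 = n + p + 2 := by omega
    rw [hm, hm2]
    have hn1 : ((n : ℚ) + 1) ≠ 0 := by positivity
    have hn2 : ((n : ℚ) + (p : ℚ) + 2) ≠ 0 := by positivity
    have e1 : ((n+p+1).choose (n+1) : ℚ) = ((n+p+1).choose n : ℚ) * ((p : ℚ)+1) / ((n : ℚ)+1) := by
      rw [eq_div_iff hn1]
      have h := Nat.choose_succ_right_eq (n+p+1) n
      have h' : n + p + 1 - n = p + 1 := by omega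
      rw [h'] at h
      exact_mod_cast h
    have e2 : ((n+p+2).choose (n+1) : ℚ) = ((n : ℚ)+(p : ℚ)+2) * ((n+p+1).choose n : ℚ) / ((n : ℚ)+1) := by
      rw [eq_div_iff hn1]
      have h := Nat.add_one_mul_choose_eq (n+p+1) n
      have h' : (((n+p+2) * (n+p+1).choose n : ℕ) : ℚ) = (((n+p+2).choose (n+1) * (n+1) : ℕ) : ℚ) := by
        exact_mod_cast congrArg (Nat.cast (R := ℚ)) h
      push_cast at h'
      linarith [h']
    have e3 : ((2*(n+p+2)).choose (n+p+2) : ℚ) =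
        2 * (2*((n:ℚ)+(p:ℚ)+1)+1) * ((2*(n+p+1)).choose (n+p+1) : ℚ) / ((n:ℚ)+(p:ℚ)+2) := by
      rw [eq_div_iff hn2]
      have h := Nat.succ_mul_centralBinom_succ (n+p+1)
      simp only [Nat.centralBinom] at h
      have h2 : n + p + 1 + 1 = n + p + 2 := by omega
      rw [h2] at h
      have h' : (((n+p+2) * (2*(n+p+2)).choose (n+p+2) : ℕ) : ℚ) = ((2 * (2*(n+p+1)+1) * (2*(n+p+1)).choose (n+p+1) : ℕ) : ℚ) := by
        exact_mod_cast congrArg (Nat.cast (R := ℚ)) h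
      push_cast at h'
      linarith [h']
    rw [e1, e2, e3, oddharm_succ (n+p+1), oddharm_succ p]
    have h1 : (2 * ((n:ℚ)+(p:ℚ)+1) + 1) ≠ 0 := by positivity
    have h2 : (2 * (p:ℚ) + 1) ≠ 0 := by positivity
    push_cast
    field_simp
    ring
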